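/- Let n ∈ ℕ and λ, μ ∈ ℝ. If G_n : P_n → P_{n+1} is a patched Markov embedding such that the pullback of A_{n+1}^{λ,μ} by G_n equals A_n^{λ,μ}, then either λ = μ = 0 or G_n is a scalar patched Markov embedding (i.e. the weights a_i are all equal). -/

import Mathlib

open Finset

noncomputable section

/-- `Psim n` is the space `P_n` of positive probability measures on
`Ω_{n+1} = {1,…,n+1}`, viewed as a subset of `ℝ^{n+1}`. -/
def Psim (n : ℕ) : Set (Fin (n + 1) → ℝ) :=
  {p | (∀ i, p i ∈ Set.Ioo (0 : ℝ) 1) ∧ ∑ i, p i = 1}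

/-- The tangent space of `P_n` (at any point): vectors in `ℝ^{n+1}` whose
coordinates sum to zero. -/
def Tang (n : ℕ) : Set (Fin (n + 1) → ℝ) :=
  {X | ∑ i, X i = 0}

/-- `B` is a symmetric bilinear form on `ℝ^{n+1}` (the value of a symmetric
`(0,2)`-tensor field at a point). -/
def IsSymmBilin {n : ℕ} (B : (Fin (n + 1) → ℝ) → (Fin (n + 1) → ℝ) → ℝ) : Prop :=
  (∀ X Y, B X Y = B Y X) ∧
  (∀ (c : ℝ) (X X' Y : Fin (n + 1) → ℝ), B (c • X + X') Y = c * B X Y + B X' Y)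

/-- `A` is a family of symmetric `(0,2)`-tensor fields `A_n` on `P_n`
(indices `n ≥ 1`, matching the paper's `ℕ = {1,2,…}`). -/
def SymmTF (A : (n : ℕ) → (Fin (n + 1) → ℝ) → (Fin (n + 1) → ℝ) → (Fin (n + 1) → ℝ) → ℝ) :
    Prop :=
  ∀ n : ℕ, 0 < n → ∀ p ∈ Psim n, IsSymmBilin (A n p)

/-- The scalar patched Markov embedding `G_n^{α,σ} : P_n → P_{n+1}`,
`G_n^{α,σ}(p) = α ∑_{i ∈ Ω_{n+1}} p(i) δ_{σ(i)} + (1-α) δ_{σ(n+2)}`. -/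
def sPatch (n : ℕ) (α : ℝ) (σ : Equiv.Perm (Fin (n + 2))) (p : Fin (n + 1) → ℝ) :
    Fin (n + 2) → ℝ := fun I =>
  α * ∑ i : Fin (n + 1), p i * (if σ i.castSucc = I then 1 else 0) +
    (1 - α) * (if σ (Fin.last (n + 1)) = I then 1 else 0)

/-- The differential of `G_n^{α,σ}`: `dG(X) = α ∑_i X^i δ_{σ(i)}`. -/
def sPatchD (n : ℕ) (α : ℝ) (σ : Equiv.Perm (Fin (n + 2))) (X : Fin (n + 1) → ℝ) :
    Fin (n + 2) → ℝ := fun I =>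
  α * ∑ i : Fin (n + 1), X i * (if σ i.castSucc = I then 1 else 0)

/-- A general patched Markov embedding `G_n : P_n → P_{n+1}` with weights `a_i`:
`G_n(p) = ∑_i p(i) (a_i δ_{σ(i)} + (1-a_i) δ_{σ(n+2)})`. -/
def patch (n : ℕ) (a : Fin (n + 1) → ℝ) (σ : Equiv.Perm (Fin (n + 2)))
    (p : Fin (n + 1) → ℝ) : Fin (n + 2) → ℝ := fun I =>
  ∑ i : Fin (n + 1), p i * (a i * (if σ i.castSucc = I then 1 else 0) +
    (1 - a i) * (if σ (Fin.last (n + 1)) = I then 1 else 0))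

/-- The differential of a patched Markov embedding. -/
def patchD (n : ℕ) (a : Fin (n + 1) → ℝ) (σ : Equiv.Perm (Fin (n + 2)))
    (X : Fin (n + 1) → ℝ) : Fin (n + 2) → ℝ := fun I =>
  ∑ i : Fin (n + 1), X i * (a i * (if σ i.castSucc = I then 1 else 0) +
    (1 - a i) * (if σ (Fin.last (n + 1)) = I then 1 else 0))

/-- Invariance of the family `{A_n}` under scalar patched Markov embeddings:
the pullback of `A_{n+1}` by each `G_n^{α,σ}` equals `A_n`. -/
def InvariantSP
    (A : (n : ℕ) → (Fin (n + 1) → ℝ) → (Fin (n + 1) → ℝ) → (Fin (n + 1) → ℝ) → ℝ) : Prop :=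
  ∀ n : ℕ, 0 < n → ∀ α ∈ Set.Ioo (0 : ℝ) 1, ∀ σ : Equiv.Perm (Fin (n + 2)),
    ∀ p ∈ Psim n, ∀ X ∈ Tang n, ∀ Y ∈ Tang n,
      A (n + 1) (sPatch n α σ p) (sPatchD n α σ X) (sPatchD n α σ Y) = A n p X Y

/-- The vector field `Z_i^n` on `P_n`, with (constant) coordinates
`e_i - (1/(n+1)) ∑_j e_j`. -/
def Zvec (n : ℕ) (i : Fin (n + 1)) : Fin (n + 1) → ℝ :=
  fun k => (if k = i then 1 else 0) - 1 / (n + 1)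

/-- The uniform probability measure `b_n ∈ P_n`. -/
def bunif (n : ℕ) : Fin (n + 1) → ℝ := fun _ => 1 / (n + 1)

/-- The point `p_u ∈ P_1`: `p_u(1) = u`, `p_u(2) = 1 - u`. -/
def pu (u : ℝ) : Fin 2 → ℝ := ![u, 1 - u]

/-- The tensor field `A_n^d(X,Y)_p = ∑_i X^i Y^i / p(i)²`. -/
def Ad (n : ℕ) (p X Y : Fin (n + 1) → ℝ) : ℝ := ∑ i, X i * Y i / (p i) ^ 2

/-- The tensor field `A_n^s(X,Y)_p = (∑_i X^i/p(i)) (∑_j Y^j/p(j))`. -/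
def As (n : ℕ) (p X Y : Fin (n + 1) → ℝ) : ℝ := (∑ i, X i / p i) * (∑ j, Y j / p j)

/-- The Fisher metric `g_n^F(X,Y)_p = ∑_i X^i Y^i / p(i)`. -/
def Fish (n : ℕ) (p X Y : Fin (n + 1) → ℝ) : ℝ := ∑ i, X i * Y i / p i

/-- The point `ψ_u^σ(α) = G_1^{α,σ}(p_u) ∈ P_2` (the indices `1,2,3` of `Ω_3`
are `0,1,2 : Fin 3`). -/
def psiPt (α u : ℝ) (σ : Equiv.Perm (Fin 3)) : Fin 3 → ℝ := sPatch 1 α σ (pu u)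

/-- `E^k ⊂ TP_2`: the line spanned by `Z_i^2 - Z_j^2 = e_i - e_j` where
`{i,j,k} = {0,1,2}`; equivalently, the sum-zero vectors vanishing at `k`. -/
def Esub (k : Fin 3) : Set (Fin 3 → ℝ) := {W | (∑ i, W i = 0) ∧ W k = 0}

/-- `u_α^{ij}` (formed with `σ = id`). -/
def uRatio (α u : ℝ) (i j : Fin 3) : ℝ :=
  psiPt α u (Equiv.refl (Fin 3)) i /
    (psiPt α u (Equiv.refl (Fin 3)) i + psiPt α u (Equiv.refl (Fin 3)) j)

/-- The image `dH^{ij}_q(Z_1^1) = ((q(i)+q(j))/2) (Z_i^2 - Z_j^2)` of `Z_1^1`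
under the differential of `H_q^{ij} : P_1 → P_2`. -/
def dHvec (q : Fin 3 → ℝ) (i j : Fin 3) : Fin 3 → ℝ :=
  ((q i + q j) / 2) • (Zvec 2 i - Zvec 2 j)

/-- Condition (C1) for `A_2`. -/
def CondC1 (A2 : (Fin 3 → ℝ) → (Fin 3 → ℝ) → (Fin 3 → ℝ) → ℝ) : Prop :=
  ∃ r : ℝ → ℝ, (∀ t : ℝ, 0 < t → 0 < r t) ∧ (∀ t : ℝ, 0 < t → r t * r (1 / t) = 1) ∧
    ∀ α ∈ Set.Ioo (0 : ℝ) 1, ∀ u ∈ Set.Ioo (0 : ℝ) 1, ∀ σ : Equiv.Perm (Fin 3),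
      ∀ W1 W2 W3 : Fin 3 → ℝ, W1 ∈ Esub (σ 0) → W2 ∈ Esub (σ 1) → W3 ∈ Esub (σ 2) →
        W3 = W1 + W2 →
        A2 (psiPt α u σ) W3 W1 = r (u / (1 - u)) * A2 (psiPt α u σ) W3 W2

/-- Condition (C2) for `A_1` and `A_2`: `A_1` is positive semidefinite and
degenerate at `b_1`, and the parallelism identity holds. -/
def CondC2 (A1 : (Fin 2 → ℝ) → (Fin 2 → ℝ) → (Fin 2 → ℝ) → ℝ)
    (A2 : (Fin 3 → ℝ) → (Fin 3 → ℝ) → (Fin 3 → ℝ) → ℝ) : Prop :=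
  (∀ p ∈ Psim 1, ∀ X ∈ Tang 1, 0 ≤ A1 p X X) ∧
  (∃ X ∈ Tang 1, X ≠ 0 ∧ ∀ Y ∈ Tang 1, A1 (bunif 1) X Y = 0) ∧
  (∀ α ∈ Set.Ioo (0 : ℝ) 1, ∀ u ∈ Set.Ioo (0 : ℝ) 1, ∀ σ : Equiv.Perm (Fin 3),
    ∀ i j k l : Fin 3, i ≠ j → k ≠ l →
      A2 (psiPt α u σ) (dHvec (psiPt α u σ) (σ i) (σ j)) (dHvec (psiPt α u σ) (σ k) (σ l)) =
        (Real.sign (2 * uRatio α u i j - 1) *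
            Real.sqrt (A1 (pu (uRatio α u i j)) (Zvec 1 0) (Zvec 1 0))) *
        (Real.sign (2 * uRatio α u k l - 1) *
            Real.sqrt (A1 (pu (uRatio α u k l)) (Zvec 1 0) (Zvec 1 0))))

/-- `H : P_m → P_n` (together with its linear differential `dH`) is a
composition of scalar patched Markov embeddings. -/
inductive IsSPMComp :
    (m n : ℕ) → ((Fin (m + 1) → ℝ) → (Fin (n + 1) → ℝ)) →
      ((Fin (m + 1) → ℝ) → (Fin (n + 1) → ℝ)) → Prop
  | refl (m : ℕ) : IsSPMComp m m id id
  | step {m n : ℕ} {H dH : (Fin (m + 1) → ℝ) → (Fin (n + 1) → ℝ)} (α : ℝ)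
      (hα : α ∈ Set.Ioo (0 : ℝ) 1) (σ : Equiv.Perm (Fin (n + 2)))
      (h : IsSPMComp m n H dH) :
      IsSPMComp m (n + 1) (fun p => sPatch n α σ (H p)) (fun X => sPatchD n α σ (dH X))

/-- `Q` is a Markov partition: each `Q i` is a probability measure on `Ω_{N+1}`
and the supports of the `Q i` are pairwise disjoint with union `Ω_{N+1}`. -/
def IsMarkovPartition {n N : ℕ} (Q : Fin (n + 1) → Fin (N + 1) → ℝ) : Prop :=
  (∀ i, (∀ I, 0 ≤ Q i I) ∧ ∑ I, Q i I = 1) ∧ (∀ I, ∃! i, Q i I ≠ 0)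

/-- The Markov embedding `F(p) = ∑_i p(i) Q_i` induced by `Q` (the same formula
gives its differential on tangent vectors). -/
def mEmb {n N : ℕ} (Q : Fin (n + 1) → Fin (N + 1) → ℝ) (p : Fin (n + 1) → ℝ) :
    Fin (N + 1) → ℝ := fun I => ∑ i, p i * Q i I

/-- `A_n^{λ,μ} = λ A_n^d + μ A_n^s`. -/
def Alm (n : ℕ) (lam mu : ℝ) (p X Y : Fin (n + 1) → ℝ) : ℝ :=
  lam * Ad n p X Y + mu * As n p X Y

lemma sum_fin_perm (n : ℕ) (σ : Equiv.Perm (Fin (n+2))) (f : Fin (n+2) → ℝ) :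
    ∑ I, f I = ∑ j : Fin (n+1), f (σ j.castSucc) + f (σ (Fin.last (n+1))) := by
  rw [← Equiv.sum_comp σ f, Fin.sum_univ_castSucc]

lemma patchD_castSucc (n : ℕ) (a : Fin (n+1) → ℝ) (σ : Equiv.Perm (Fin (n+2)))
    (X : Fin (n+1) → ℝ) (j : Fin (n+1)) :
    patchD n a σ X (σ j.castSucc) = X j * a j := by
  unfold patchD
  have h2 : (if σ (Fin.last (n+1)) = σ j.castSucc then (1:ℝ) else 0) = 0 := by
    simp [Equiv.apply_eq_iff_eq, (Fin.castSucc_lt_last j).ne']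
  simp only [Equiv.apply_eq_iff_eq, Fin.castSucc_inj, h2, mul_zero, add_zero,
    if_neg (Fin.castSucc_lt_last j).ne', zero_mul]
  have h1 : ∀ i, X i * (a i * (if i = j then (1:ℝ) else 0)) = if i = j then X j * a j else 0 := by
    intro i; split <;> simp_all
  rw [Finset.sum_congr rfl fun i _ => h1 i, Finset.sum_ite_eq' univ j]
  simp

lemma patchD_last (n : ℕ) (a : Fin (n+1) → ℝ) (σ : Equiv.Perm (Fin (n+2)))
    (X : Fin (n+1) → ℝ) :
    patchD n a σ X (σ (Fin.last (n+1))) = ∑ i, X i * (1 - a i) := by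
  unfold patchD
  have h2 : ∀ i : Fin (n+1), (if σ i.castSucc = σ (Fin.last (n+1)) then (1:ℝ) else 0) = 0 := by
    intro i; simp [Equiv.apply_eq_iff_eq, (Fin.castSucc_lt_last i).ne]
  refine Finset.sum_congr rfl fun i _ => ?_
  rw [h2 i, if_pos rfl]; ring

lemma patch_eq_patchD (n : ℕ) (a : Fin (n+1) → ℝ) (σ : Equiv.Perm (Fin (n+2)))
    (p : Fin (n+1) → ℝ) : patch n a σ p = patchD n a σ p := rfl

lemma key_pullback (n : ℕ) (lam mu : ℝ) (a : Fin (n+1) → ℝ)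
    (ha : ∀ i, a i ∈ Set.Ioo (0:ℝ) 1) (σ : Equiv.Perm (Fin (n+2)))
    (p X : Fin (n+1) → ℝ) (hp : ∀ k, 0 < p k) :
    Alm (n+1) lam mu (patch n a σ p) (patchD n a σ X) (patchD n a σ X) =
      Alm n lam mu p X X
      + (lam + mu) * (∑ k, X k * (1 - a k))^2 / (∑ k, p k * (1 - a k))^2
      + 2 * mu * (∑ k, X k / p k) * (∑ k, X k * (1 - a k)) / (∑ k, p k * (1 - a k)) := by
  have hc : 0 < ∑ k, p k * (1 - a k) := by
    apply Finset.sum_pos (fun k _ => mul_pos (hp k) (by linarith [(ha k).2])) univ_nonempty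
  set S := ∑ k, X k * (1 - a k) with hS
  set c := ∑ k, p k * (1 - a k) with hcdef
  set T := ∑ k, X k / p k with hT
  have hAd : Ad (n+1) (patch n a σ p) (patchD n a σ X) (patchD n a σ X)
      = Ad n p X X + S^2 / c^2 := by
    unfold Ad
    rw [sum_fin_perm n σ]
    simp only [patch_eq_patchD, patchD_castSucc, patchD_last, ← hS, ← hcdef]
    have : ∀ j, X j * a j * (X j * a j) / (p j * a j)^2 = X j * X j / (p j)^2 := by
      intro j
      have h1 : (a j) ≠ 0 := (ha j).1.ne'
      have h2 : (p j) ≠ 0 := (hp j).ne'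
      field_simp
    rw [Finset.sum_congr rfl fun j _ => this j]
    ring
  have hAs : As (n+1) (patch n a σ p) (patchD n a σ X) (patchD n a σ X)
      = (T + S / c) * (T + S / c) := by
    unfold As
    rw [sum_fin_perm n σ]
    simp only [patch_eq_patchD, patchD_castSucc, patchD_last, ← hS, ← hcdef]
    have : ∀ j, X j * a j / (p j * a j) = X j / p j := by
      intro j
      exact mul_div_mul_right _ _ (ha j).1.ne'
    rw [Finset.sum_congr rfl fun j _ => this j, ← hT]
  unfold Alm
  rw [hAd, hAs]
  unfold As; rw [← hT]
  have hc' : c ≠ 0 := hc.ne'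
  field_simp
  ring

/-- If the pullback of `A_{n+1}^{λ,μ}` by a patched Markov embedding `G_n`
(with weights `a_i`) equals `A_n^{λ,μ}`, then either `λ = μ = 0` or the weights
`a_i` are all equal (i.e. `G_n` is a scalar patched Markov embedding). -/
theorem pullback_Alm_patch_scalar (n : ℕ) (hn : 0 < n) (lam mu : ℝ)
    (a : Fin (n + 1) → ℝ) (ha : ∀ i, a i ∈ Set.Ioo (0 : ℝ) 1)
    (σ : Equiv.Perm (Fin (n + 2)))
    (hpull : ∀ p ∈ Psim n, ∀ X ∈ Tang n, ∀ Y ∈ Tang n,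
      Alm (n + 1) lam mu (patch n a σ p) (patchD n a σ X) (patchD n a σ Y) =
        Alm n lam mu p X Y) :
    (lam = 0 ∧ mu = 0) ∨ (∀ i j : Fin (n + 1), a i = a j) := by
  by_cases hs : ∀ i j : Fin (n+1), a i = a j
  · exact Or.inr hs
  left
  push_neg at hs
  obtain ⟨i, j, hij⟩ := hs
  have hij' : i ≠ j := by rintro rfl; exact hij rfl
  set X : Fin (n+1) → ℝ := fun k => (if k = i then (1:ℝ) else 0) - (if k = j then 1 else 0)
    with hXdef
  have hXf : ∀ f : Fin (n+1) → ℝ, ∑ k, X k * f k = f i - f j := by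
    intro f
    simp only [hXdef, sub_mul, ite_mul, one_mul, zero_mul]
    rw [Finset.sum_sub_distrib, Finset.sum_ite_eq' univ i f, Finset.sum_ite_eq' univ j f]
    simp
  have hXsum : ∑ k, X k = 0 := by
    have := hXf (fun _ => 1); simp only [mul_one] at this; simpa using this
  have hXtang : X ∈ Tang n := hXsum
  have hS : ∑ k, X k * (1 - a k) = a j - a i := by rw [hXf]; ring
  have hSne : ∑ k, X k * (1 - a k) ≠ 0 := by rw [hS]; exact sub_ne_zero.mpr (Ne.symm hij)
  have hTgen : ∀ p : Fin (n+1) → ℝ, ∑ k, X k / p k = (p i)⁻¹ - (p j)⁻¹ := by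
    intro p; simp only [div_eq_mul_inv]; exact hXf _
  have hcpos : ∀ p : Fin (n+1) → ℝ, (∀ k, 0 < p k) → 0 < ∑ k, p k * (1 - a k) := by
    intro p hp
    exact Finset.sum_pos (fun k _ => mul_pos (hp k) (by linarith [(ha k).2])) univ_nonempty
  have hEq : ∀ p : Fin (n+1) → ℝ, (∀ k, 0 < p k) → p ∈ Psim n →
      (lam + mu) * (∑ k, X k * (1 - a k))^2 / (∑ k, p k * (1 - a k))^2
      + 2 * mu * (∑ k, X k / p k) * (∑ k, X k * (1 - a k)) / (∑ k, p k * (1 - a k)) = 0 := by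
    intro p hp hpP
    have h1 := hpull p hpP X hXtang X hXtang
    have h2 := key_pullback n lam mu a ha σ p X hp
    linarith
  have hn1 : (1:ℝ) ≤ (n:ℝ) := by exact_mod_cast hn
  have hnn : (0:ℝ) < (n:ℝ) + 1 := by positivity
  -- uniform point
  have hbpos : ∀ k, 0 < bunif n k := fun k => by
    simp only [bunif]; positivity
  have hbsum : ∑ k, bunif n k = 1 := by
    simp [bunif, Finset.sum_const, Finset.card_univ]
    field_simp
  have hbP : bunif n ∈ Psim n := by
    refine ⟨fun k => ⟨hbpos k, ?_⟩, hbsum⟩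
    simp only [bunif]
    rw [div_lt_one hnn]; linarith
  have hTb : ∑ k, X k / bunif n k = 0 := by rw [hTgen]; exact sub_self _
  have hlm : lam + mu = 0 := by
    have hE := hEq (bunif n) hbpos hbP
    rw [hTb] at hE
    have hc := hcpos (bunif n) hbpos
    have hc2 : (∑ k, bunif n k * (1 - a k))^2 ≠ 0 := pow_ne_zero _ hc.ne'
    have hS2 : (∑ k, X k * (1 - a k))^2 ≠ 0 := pow_ne_zero _ hSne
    have : (lam + mu) * (∑ k, X k * (1 - a k))^2 = 0 := by
      field_simp at hE
      simp at hE; rcases hE with h | h | h <;> simp [h]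
    rcases mul_eq_zero.mp this with h | h
    · exact h
    · exact absurd h hS2
  -- perturbed point
  set p2 : Fin (n+1) → ℝ := fun k => bunif n k + (1/(2*((n:ℝ)+1))) * X k with hp2def
  have hp2i : p2 i = 3 / (2*((n:ℝ)+1)) := by
    simp only [hp2def, hXdef, bunif, if_pos rfl, if_neg hij']
    field_simp; norm_num
  have hp2j : p2 j = 1 / (2*((n:ℝ)+1)) := by
    simp only [hp2def, hXdef, bunif, if_neg (Ne.symm hij'), if_pos rfl]
    field_simp; norm_num
  have hp2pos : ∀ k, 0 < p2 k := by
    intro k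
    by_cases hki : k = i
    · rw [hki, hp2i]; positivity
    by_cases hkj : k = j
    · rw [hkj, hp2j]; positivity
    · have hk : p2 k = bunif n k := by
        simp [hp2def, hXdef, if_neg hki, if_neg hkj]
      rw [hk]; exact hbpos k
  have hp2sum : ∑ k, p2 k = 1 := by
    simp only [hp2def]
    rw [Finset.sum_add_distrib, ← Finset.mul_sum, hXsum, mul_zero, add_zero, hbsum]
  have hp2P : p2 ∈ Psim n := by
    refine ⟨fun k => ⟨hp2pos k, ?_⟩, hp2sum⟩
    by_cases hki : k = i
    · rw [hki, hp2i, div_lt_one (by positivity)]; linarith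
    by_cases hkj : k = j
    · rw [hkj, hp2j, div_lt_one (by positivity)]; linarith
    · have hk : p2 k = bunif n k := by
        simp [hp2def, hXdef, if_neg hki, if_neg hkj]
      rw [hk]
      simp only [bunif]
      rw [div_lt_one hnn]; linarith
  have hT2 : ∑ k, X k / p2 k ≠ 0 := by
    rw [hTgen]
    intro h
    have h' : (p2 i)⁻¹ = (p2 j)⁻¹ := by linarith [sub_eq_zero.mp h]
    have heq : p2 i = p2 j := inv_injective h'
    rw [hp2i, hp2j] at heq
    have hb2 : (2*((n:ℝ)+1)) ≠ 0 := by positivity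
    rw [div_eq_div_iff hb2 hb2] at heq
    nlinarith
  have hmu : mu = 0 := by
    have hE := hEq p2 hp2pos hp2P
    rw [hlm] at hE
    simp only [zero_mul, zero_div, zero_add] at hE
    have hc := hcpos p2 hp2pos
    have := div_eq_zero_iff.mp hE
    rcases this with h | h
    · rcases mul_eq_zero.mp h with h' | h'
      · rcases mul_eq_zero.mp h' with h'' | h''
        · rcases mul_eq_zero.mp h'' with h3 | h3
          · norm_num at h3
          · exact h3
        · exact absurd h'' hT2
      · exact absurd h' hSne
    · exact absurd h hc.ne'
  exact ⟨by linarith, hmu⟩
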